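/- Suppose C attains its maximum M at a unique point θ₁ of the period interval [θ₁, θ₁ + 2S). Then: (i) for every integer k ≥ 0 and every ν ≥ k + 1, lim_{λ→M⁺} (λ − M)^ν · L^{(k)}(λ) = 0; (ii) if moreover there exist constants A > 0, α ≥ 1 and ε > 0 such that M − C(θ) ≥ A·|θ − θ₁|^α for all θ with |θ − θ₁| < ε, then lim_{λ→M⁺} (λ − M)^ν · L^{(k)}(λ) = 0 for every ν > k + 1 − 1/α. -/

import Mathlib

open MeasureTheory Filter Set Topology

lemma stmt6_le {S M : ℝ} {C : ℝ → ℝ} (hS : 0 < S) (hper : Function.Periodic C (2*S))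
    (hM : IsGreatest (C '' Set.Icc 0 (2*S)) M) : ∀ θ, C θ ≤ M := by
  intro θ
  have h2S : (0:ℝ) < 2*S := by linarith
  set n : ℤ := ⌊θ/(2*S)⌋ with hn
  have h1 : 0 ≤ θ - n*(2*S) := Int.sub_floor_div_mul_nonneg θ h2S
  have h2 : θ - n*(2*S) < 2*S := Int.sub_floor_div_mul_lt θ h2S
  have h3 : C (θ - n*(2*S)) ≤ M := hM.2 ⟨θ - n*(2*S), ⟨h1, h2.le⟩, rfl⟩
  rwa [hper.sub_int_mul_eq] at h3

lemma stmt6_max_loc {S M θ₁ : ℝ} {C : ℝ → ℝ} (hS : 0 < S)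
    (hper : Function.Periodic C (2*S))
    (hargmax : {θ | θ ∈ Set.Ico θ₁ (θ₁ + 2 * S) ∧ C θ = M} = {θ₁}) :
    ∀ θ : ℝ, C θ = M → ∃ n : ℤ, θ = θ₁ + n * (2*S) := by
  intro θ hθ
  have h2S : (0:ℝ) < 2*S := by linarith
  set n : ℤ := ⌊(θ - θ₁)/(2*S)⌋ with hn
  have h1 : 0 ≤ (θ - θ₁) - n*(2*S) := Int.sub_floor_div_mul_nonneg (θ - θ₁) h2S
  have h2 : (θ - θ₁) - n*(2*S) < 2*S := Int.sub_floor_div_mul_lt (θ - θ₁) h2S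
  have hCt : C (θ - n*(2*S)) = M := by rw [hper.sub_int_mul_eq]; exact hθ
  have hmem : (θ - n*(2*S)) ∈ {θ | θ ∈ Set.Ico θ₁ (θ₁ + 2 * S) ∧ C θ = M} :=
    ⟨⟨by linarith, by linarith⟩, hCt⟩
  rw [hargmax] at hmem
  have h4 : θ - n*(2*S) = θ₁ := hmem
  exact ⟨n, by linarith⟩

lemma stmt6_inv_pow_le {y μ m β : ℝ} (k : ℕ) (hμ : 0 < μ) (hm : 0 < m)
    (hμy : μ ≤ y) (hmy : m ≤ y) (hβ0 : 0 ≤ β) (hβk : β ≤ (k:ℝ)+1) :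
    ((y^(k+1)))⁻¹ ≤ μ^(β-((k:ℝ)+1)) * m^(-β) := by
  have hy : 0 < y := lt_of_lt_of_le hμ hμy
  have h1 : μ^(((k:ℝ)+1)-β) * m^β ≤ y^(((k:ℝ)+1)-β) * y^β :=
    mul_le_mul (Real.rpow_le_rpow hμ.le hμy (by linarith)) (Real.rpow_le_rpow hm.le hmy hβ0)
      (Real.rpow_nonneg hm.le _) (Real.rpow_nonneg hy.le _)
  rw [← Real.rpow_add hy] at h1
  have he : ((k:ℝ)+1) - β + β = (((k+1:ℕ)):ℝ) := by push_cast; ring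
  rw [he, Real.rpow_natCast] at h1
  have hpos : 0 < μ^(((k:ℝ)+1)-β) * m^β :=
    mul_pos (Real.rpow_pos_of_pos hμ _) (Real.rpow_pos_of_pos hm _)
  have h2 : (y^(k+1))⁻¹ ≤ (μ^(((k:ℝ)+1)-β) * m^β)⁻¹ := by gcongr
  rw [mul_inv, ← Real.rpow_neg hμ.le, ← Real.rpow_neg hm.le,
    show -(((k:ℝ)+1)-β) = β - ((k:ℝ)+1) by ring] at h2
  exact h2

lemma stmt6_deriv {S M : ℝ} {C : ℝ → ℝ} (hS : 0 < S) (hCc : Continuous C)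
    (hCle : ∀ θ, C θ ≤ M)
    (L : ℝ → ℝ) (hL : ∀ l, M < l → L l = ∫ θ in (0:ℝ)..(2*S), 1 / (l - C θ)) :
    ∀ (n : ℕ) (l : ℝ), M < l → iteratedDeriv n L l
      = (-1:ℝ)^n * (n.factorial) * ∫ θ in (0:ℝ)..(2*S), ((l - C θ)^(n+1))⁻¹ := by
  intro n
  induction n with
  | zero =>
    intro l hl
    simp only [iteratedDeriv_zero, pow_zero, Nat.factorial_zero, Nat.cast_one, one_mul,
      zero_add, pow_one]
    rw [hL l hl]
    congr 1
    ext θ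
    rw [one_div]
  | succ n ih =>
    intro l hl
    have hε : 0 < (l - M)/2 := by linarith
    have hball : ∀ x ∈ Metric.ball l ((l-M)/2), ∀ θ : ℝ, (l-M)/2 ≤ x - C θ := by
      intro x hx θ
      rw [Metric.mem_ball, Real.dist_eq, abs_lt] at hx
      have := hCle θ
      linarith [hx.1]
    have hder : HasDerivAt (fun x => ∫ θ in (0:ℝ)..(2*S), ((x - C θ)^(n+1))⁻¹)
        (∫ θ in (0:ℝ)..(2*S), -(((n:ℝ)+1) * ((l - C θ)^(n+2))⁻¹)) l := by
      have := (intervalIntegral.hasDerivAt_integral_of_dominated_loc_of_deriv_le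
        (F := fun (x : ℝ) (θ : ℝ) => ((x - C θ)^(n+1))⁻¹)
        (F' := fun (x : ℝ) (θ : ℝ) => -(((n:ℝ)+1) * ((x - C θ)^(n+2))⁻¹))
        (bound := fun _ => ((n:ℝ)+1) * ((((l-M)/2))^(n+2))⁻¹)
        (μ := volume) (a := 0) (b := 2*S) (x₀ := l) (Metric.ball_mem_nhds l hε)
        ?_ ?_ ?_ ?_ ?_ ?_).2
      · exact this
      · exact Filter.Eventually.of_forall fun x =>
          (((measurable_const.sub hCc.measurable).pow_const (n+1)).inv).aestronglyMeasurable
      · apply Continuous.intervalIntegrable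
        apply Continuous.inv₀ ((continuous_const.sub hCc).pow (n+1))
        intro θ
        exact pow_ne_zero _ (by have := hCle θ; intro h; rw [Pi.sub_apply, sub_eq_zero] at h; linarith)
      · exact (((measurable_const.sub hCc.measurable).pow_const (n+2)).inv.const_mul _).neg
          |>.aestronglyMeasurable
      · refine ae_of_all _ fun θ _ x hx => ?_
        have h1 := hball x hx θ
        have hx2 : (0:ℝ) < x - C θ := lt_of_lt_of_le hε h1
        rw [norm_neg, norm_mul, Real.norm_eq_abs, Real.norm_eq_abs,
          abs_of_pos (by positivity : (0:ℝ) < (n:ℝ)+1),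
          abs_of_pos (inv_pos.2 (by positivity : (0:ℝ) < (x - C θ)^(n+2)))]
        have hp : ((l-M)/2)^(n+2) ≤ (x - C θ)^(n+2) := pow_le_pow_left₀ hε.le h1 _
        have hinv : ((x - C θ)^(n+2))⁻¹ ≤ (((l-M)/2)^(n+2))⁻¹ := by
          apply inv_anti₀ (by positivity) hp
        exact mul_le_mul_of_nonneg_left hinv (by positivity)
      · exact intervalIntegrable_const
      · refine ae_of_all _ fun θ _ x hx => ?_
        have h1 := hball x hx θ
        have hne : x - C θ ≠ 0 := ne_of_gt (lt_of_lt_of_le hε h1)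
        have h2 : HasDerivAt (fun y : ℝ => (y - C θ)^(n+1))
            (((n+1 : ℕ):ℝ) * (x - C θ)^(n+1-1) * 1) x :=
          ((hasDerivAt_id x).sub_const (C θ)).pow (n+1)
        have h3 := h2.inv (pow_ne_zero _ hne)
        exact h3.congr_deriv (by
          rw [Nat.add_sub_cancel]
          push_cast
          field_simp
          ring)
    have hEq : iteratedDeriv n L =ᶠ[𝓝 l]
        fun x => (-1:ℝ)^n * (n.factorial) * ∫ θ in (0:ℝ)..(2*S), ((x - C θ)^(n+1))⁻¹ :=
      Filter.eventually_of_mem (isOpen_Ioi.mem_nhds hl) fun x hx => ih x hx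
    rw [iteratedDeriv_succ, hEq.deriv_eq, (hder.const_mul ((-1:ℝ)^n * (n.factorial))).deriv,
      intervalIntegral.integral_neg, intervalIntegral.integral_const_mul]
    push_cast [Nat.factorial_succ, pow_succ]
    ring

theorem stmt6
    (S : ℝ) (hS : 0 < S)
    (C Sg c s : ℝ → ℝ)
    (hC_lip : ∃ K : NNReal, LipschitzWith K C)
    (hSg_lip : ∃ K : NNReal, LipschitzWith K Sg)
    (hC_per : Function.Periodic C (2 * S))
    (hSg_per : Function.Periodic Sg (2 * S))
    (hc_meas : Measurable c) (hs_meas : Measurable s)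
    (hc_bdd : ∃ B : ℝ, ∀ θ, |c θ| ≤ B) (hs_bdd : ∃ B : ℝ, ∀ θ, |s θ| ≤ B)
    (hconv : ∀ᵐ θ ∂(volume : Measure ℝ), HasDerivAt C (-(s θ)) θ ∧ HasDerivAt Sg (c θ) θ ∧
      c θ * C θ + s θ * Sg θ = 1)
    (M : ℝ) (hM : IsGreatest (C '' Set.Icc 0 (2 * S)) M)
    (L F : ℝ → ℝ)
    (hL : ∀ l : ℝ, M < l → L l = ∫ θ in (0:ℝ)..(2*S), 1 / (l - C θ))
    (hF : ∀ l : ℝ, M < l → F l = ∫ θ in (0:ℝ)..(2*S), c θ / (l - C θ))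
    (θ₁ : ℝ) (hargmax : {θ | θ ∈ Set.Ico θ₁ (θ₁ + 2 * S) ∧ C θ = M} = {θ₁}) :
    (∀ k : ℕ, ∀ ν : ℝ, (k : ℝ) + 1 ≤ ν →
      Tendsto (fun l : ℝ => (l - M) ^ ν * iteratedDeriv k L l) (𝓝[>] M) (𝓝 0)) ∧
    (∀ A α ε : ℝ, 0 < A → 1 ≤ α → 0 < ε →
      (∀ θ : ℝ, |θ - θ₁| < ε → A * |θ - θ₁| ^ α ≤ M - C θ) →
      ∀ k : ℕ, ∀ ν : ℝ, (k : ℝ) + 1 - 1 / α < ν →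
        Tendsto (fun l : ℝ => (l - M) ^ ν * iteratedDeriv k L l) (𝓝[>] M) (𝓝 0)) := by
  obtain ⟨KC, hKC⟩ := hC_lip
  have hCc : Continuous C := hKC.continuous
  have hCle : ∀ θ, C θ ≤ M := stmt6_le hS hC_per hM
  have hmax := stmt6_max_loc hS hC_per hargmax
  have hfor := stmt6_deriv hS hCc hCle L hL
  have h2S : (0:ℝ) < 2*S := by linarith
  set I : ℕ → ℝ → ℝ := fun k l => ∫ θ in (0:ℝ)..(2*S), ((l - C θ)^(k+1))⁻¹ with hIdef
  have hIcont : ∀ (k : ℕ) (l : ℝ), M < l →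
      Continuous fun θ => ((l - C θ)^(k+1))⁻¹ := by
    intro k l hl
    apply Continuous.inv₀ ((continuous_const.sub hCc).pow (k+1))
    intro θ
    exact pow_ne_zero _ (by have := hCle θ; intro h; rw [Pi.sub_apply, sub_eq_zero] at h; linarith)
  have hInn : ∀ (k : ℕ) (l : ℝ), M < l → 0 ≤ I k l := by
    intro k l hl
    apply intervalIntegral.integral_nonneg h2S.le
    intro θ _
    have h1 : (0:ℝ) ≤ l - C θ := by have := hCle θ; linarith
    exact inv_nonneg.2 (pow_nonneg h1 _)
  have hsub : Tendsto (fun l : ℝ => l - M) (𝓝[>] M) (𝓝 0) := by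
    have : Tendsto (fun l : ℝ => l - M) (𝓝 M) (𝓝 (M - M)) :=
      (continuous_id.sub continuous_const).tendsto M
    rw [sub_self] at this
    exact this.mono_left nhdsWithin_le_nhds
  have main : ∀ (k : ℕ) (ν : ℝ),
      Tendsto (fun l => (l-M)^ν * I k l) (𝓝[>] M) (𝓝 0) →
      Tendsto (fun l : ℝ => (l - M) ^ ν * iteratedDeriv k L l) (𝓝[>] M) (𝓝 0) := by
    intro k ν h
    have h2 := h.const_mul ((-1:ℝ)^k * (k.factorial))
    rw [mul_zero] at h2
    apply h2.congr'
    filter_upwards [self_mem_nhdsWithin] with l hl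
    rw [hfor k l hl]
    ring
  have hae : ∀ᵐ θ ∂(volume : Measure ℝ), C θ ≠ M := by
    have hsub2 : {θ : ℝ | C θ = M} ⊆ Set.range (fun n : ℤ => θ₁ + (n:ℝ) * (2*S)) := by
      intro θ hθ
      obtain ⟨n, hn⟩ := hmax θ hθ
      exact ⟨n, hn.symm⟩
    have h0 : volume {θ : ℝ | C θ = M} = 0 :=
      measure_mono_null hsub2 ((Set.countable_range _).measure_zero _)
    rw [ae_iff]
    simpa [not_not] using h0
  have part1 : ∀ (k : ℕ) (ν : ℝ), (k:ℝ)+1 ≤ ν →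
      Tendsto (fun l => (l-M)^ν * I k l) (𝓝[>] M) (𝓝 0) := by
    intro k ν hν
    set g : ℝ → ℝ := fun l => ∫ θ in (0:ℝ)..(2*S), ((l - M)/(l - C θ))^(k+1) with hgdef
    have hg0 : Tendsto g (𝓝[>] M) (𝓝 0) := by
      have hdct := intervalIntegral.tendsto_integral_filter_of_dominated_convergence
        (μ := volume) (a := 0) (b := 2*S)
        (F := fun (l : ℝ) (θ : ℝ) => ((l - M)/(l - C θ))^(k+1))
        (f := fun _ => (0:ℝ)) (l := 𝓝[>] M) (bound := fun _ => (1:ℝ))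
        (Filter.Eventually.of_forall fun l =>
          (((measurable_const.sub measurable_const).div
            (measurable_const.sub hCc.measurable)).pow_const (k+1)).aestronglyMeasurable)
        ?_ intervalIntegrable_const ?_
      · simpa using hdct
      · filter_upwards [self_mem_nhdsWithin] with l hl
        refine ae_of_all _ fun θ _ => ?_
        have hCθ := hCle θ
        have hpos : (0:ℝ) < l - C θ := by simp only [mem_Ioi] at hl; linarith
        have hr1 : (0:ℝ) ≤ (l - M)/(l - C θ) := by
          apply div_nonneg _ hpos.le
          simp only [mem_Ioi] at hl; linarith
        have hr2 : (l - M)/(l - C θ) ≤ 1 := by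
          rw [div_le_one hpos]; linarith
        rw [Real.norm_eq_abs, abs_pow]
        apply pow_le_one₀ (abs_nonneg _)
        rw [abs_of_nonneg hr1]; exact hr2
      · filter_upwards [hae] with θ hθ
        intro _
        have hlt : C θ < M := lt_of_le_of_ne (hCle θ) hθ
        have t2 : Tendsto (fun l : ℝ => l - C θ) (𝓝[>] M) (𝓝 (M - C θ)) := by
          have : Tendsto (fun l : ℝ => l - C θ) (𝓝 M) (𝓝 (M - C θ)) :=
            (continuous_id.sub continuous_const).tendsto M
          exact this.mono_left nhdsWithin_le_nhds
        have hdiv := hsub.div t2 (by intro h; rw [sub_eq_zero] at h; exact hθ h.symm)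
        rw [zero_div] at hdiv
        have := hdiv.pow (k+1)
        rwa [zero_pow (Nat.succ_ne_zero k)] at this
    apply squeeze_zero'
    · filter_upwards [self_mem_nhdsWithin] with l hl
      simp only [mem_Ioi] at hl
      exact mul_nonneg (Real.rpow_nonneg (by linarith) _) (hInn k l hl)
    · filter_upwards [Ioo_mem_nhdsGT (lt_add_one M)] with l hl
      obtain ⟨hl1, hl2⟩ := hl
      have hμ : (0:ℝ) < l - M := by linarith
      have hμ1 : l - M ≤ 1 := by linarith
      have key : (l - M)^(((k:ℝ)+1)) * I k l = g l := by
        rw [hgdef]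
        simp only
        have : ∀ θ : ℝ, ((l - M)/(l - C θ))^(k+1) = (l-M)^(k+1) * ((l - C θ)^(k+1))⁻¹ := by
          intro θ; rw [div_pow, div_eq_mul_inv]
        simp_rw [this]
        rw [intervalIntegral.integral_const_mul, hIdef]
        congr 1
        rw [show ((k:ℝ)+1) = (((k+1:ℕ)):ℝ) by push_cast; ring, Real.rpow_natCast]
      have hgnn : 0 ≤ g l := by
        rw [← key]
        exact mul_nonneg (Real.rpow_nonneg hμ.le _) (hInn k l hl1)
      calc (l-M)^ν * I k l
          = (l-M)^(ν - ((k:ℝ)+1)) * ((l-M)^(((k:ℝ)+1)) * I k l) := by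
            rw [← mul_assoc, ← Real.rpow_add hμ,
              show ν - ((k:ℝ)+1) + ((k:ℝ)+1) = ν by ring]
        _ = (l-M)^(ν - ((k:ℝ)+1)) * g l := by rw [key]
        _ ≤ 1 * g l := by
            apply mul_le_mul_of_nonneg_right _ hgnn
            exact Real.rpow_le_one hμ.le hμ1 (by linarith)
        _ = g l := one_mul _
    · exact hg0
  constructor
  · intro k ν hν
    exact main k ν (part1 k ν hν)
  · intro A α ε hA hα hε hlow k ν hν
    apply main k ν
    have hα0 : (0:ℝ) < α := lt_of_lt_of_le zero_lt_one hα
    have hαinv : (0:ℝ) < 1/α := by positivity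
    have hαinv1 : 1/α ≤ 1 := by rw [div_le_one hα0]; exact hα
    set β : ℝ := (max ((k:ℝ)+1-ν) 0 + 1/α)/2 with hβdef
    have hmax0 : 0 ≤ max ((k:ℝ)+1-ν) 0 := le_max_right _ _
    have hmaxlt : max ((k:ℝ)+1-ν) 0 < 1/α := max_lt (by linarith) hαinv
    have hβpos : 0 < β := by rw [hβdef]; linarith
    have hβlt : β < 1/α := by rw [hβdef]; linarith
    have hβgt : (k:ℝ)+1-ν < β := by
      have h1 := le_max_left ((k:ℝ)+1-ν) 0
      rw [hβdef]; linarith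
    have hβ1 : β ≤ 1 := hβlt.le.trans hαinv1
    have hβk : β ≤ (k:ℝ)+1 := by have hk0 : (0:ℝ) ≤ (k:ℝ) := Nat.cast_nonneg k; linarith
    have hαβ : α*β < 1 := by
      have h2 := (lt_div_iff₀ hα0).1 hβlt
      linarith
    set ε' : ℝ := min ε S with hε'def
    have hε'pos : 0 < ε' := lt_min hε hS
    have hε'S : ε' ≤ S := min_le_right _ _
    have hε'ε : ε' ≤ ε := min_le_left _ _
    set K : Set ℝ := Icc (θ₁-S) (θ₁-ε') ∪ Icc (θ₁+ε') (θ₁+S) with hKdef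
    have hKcomp : IsCompact K := isCompact_Icc.union isCompact_Icc
    have hKne : K.Nonempty := ⟨θ₁+ε', Or.inr ⟨le_refl _, by linarith⟩⟩
    obtain ⟨θs, hθsK, hθsmin⟩ := hKcomp.exists_isMinOn hKne
      ((continuous_const.sub hCc).continuousOn)
    set δ : ℝ := M - C θs with hδdef
    have hKdist : ∀ θ ∈ K, ε' ≤ |θ - θ₁| ∧ |θ - θ₁| ≤ S := by
      intro θ hθ
      rcases hθ with h | h
      · obtain ⟨h1, h2⟩ := h
        rw [abs_sub_comm, abs_of_nonneg (by linarith)]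
        constructor <;> linarith
      · obtain ⟨h1, h2⟩ := h
        rw [abs_of_nonneg (by linarith)]
        constructor <;> linarith
    have hδpos : 0 < δ := by
      rcases lt_or_eq_of_le (hCle θs) with h | h
      · rw [hδdef]; linarith
      · exfalso
        obtain ⟨n, hn⟩ := hmax θs h
        obtain ⟨hd1, hd2⟩ := hKdist θs hθsK
        have hts : θs - θ₁ = (n:ℝ) * (2*S) := by rw [hn]; ring
        rcases eq_or_ne n 0 with h0 | h0
        · rw [h0] at hts
          simp only [Int.cast_zero, zero_mul] at hts
          rw [hts] at hd1
          simp only [abs_zero] at hd1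
          linarith
        · have h1 : (1:ℝ) ≤ |(n:ℝ)| := by
            have h3 := Int.one_le_abs h0
            calc (1:ℝ) = ((1:ℤ):ℝ) := by norm_num
              _ ≤ ((|n|:ℤ):ℝ) := by exact_mod_cast h3
              _ = |(n:ℝ)| := by push_cast; ring
          have h2 : 2*S ≤ |θs - θ₁| := by
            rw [hts, abs_mul, abs_of_pos h2S]
            nlinarith
          linarith
    have hδle : ∀ θ ∈ K, δ ≤ M - C θ := fun θ hθ => hθsmin hθ
    set p : ℝ := -(α*β) with hpdef
    have hp1 : (-1:ℝ) < p := by rw [hpdef]; linarith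
    have hJ0 : IntervalIntegrable (fun t : ℝ => |t| ^ p) volume 0 S := by
      have h1 : IntervalIntegrable (fun t : ℝ => t ^ p) volume 0 S :=
        intervalIntegral.intervalIntegrable_rpow' hp1
      rw [intervalIntegrable_iff] at h1 ⊢
      refine h1.congr_fun (fun t ht => ?_) measurableSet_uIoc
      rw [uIoc_of_le hS.le] at ht
      rw [abs_of_pos ht.1]
    have hJneg : IntervalIntegrable (fun t : ℝ => |t| ^ p) volume (-S) 0 := by
      have h2 := (IntervalIntegrable.iff_comp_neg (f := fun t : ℝ => |t| ^ p)).mp hJ0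
      simp only [abs_neg, neg_zero] at h2
      exact h2.symm
    have hJ : IntervalIntegrable (fun t : ℝ => |t| ^ p) volume (-S) S := hJneg.trans hJ0
    have hJshift : IntervalIntegrable (fun θ : ℝ => |θ - θ₁| ^ p) volume (θ₁-S) (θ₁+S) := by
      have h3 := hJ.comp_sub_right θ₁
      rw [show -S + θ₁ = θ₁ - S by ring, show S + θ₁ = θ₁ + S by ring] at h3
      exact h3
    set G : ℝ → ℝ := fun θ => A^(-β) * |θ - θ₁| ^ p + δ^(-β) with hGdef
    have hGint : IntervalIntegrable G volume (θ₁-S) (θ₁+S) :=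
      (hJshift.const_mul _).add intervalIntegrable_const
    set Cst : ℝ := ∫ θ in (θ₁-S)..(θ₁+S), G θ with hCstdef
    have hG0 : ∀ θ, 0 ≤ G θ := fun θ =>
      add_nonneg (mul_nonneg (Real.rpow_nonneg hA.le _) (Real.rpow_nonneg (abs_nonneg _) _))
        (Real.rpow_nonneg hδpos.le _)
    have hCst0 : 0 ≤ Cst :=
      intervalIntegral.integral_nonneg (by linarith) (fun θ _ => hG0 θ)
    have hθ₁ae : ∀ᵐ θ ∂(volume : Measure ℝ), θ ≠ θ₁ := by
      rw [ae_iff]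
      simp only [not_not, Set.setOf_eq_eq_singleton]
      exact measure_singleton θ₁
    have hbound : ∀ l : ℝ, M < l → I k l ≤ (l-M)^(β - ((k:ℝ)+1)) * Cst := by
      intro l hl
      have hμ : (0:ℝ) < l - M := by linarith
      have hper' : Function.Periodic (fun θ => ((l - C θ)^(k+1))⁻¹) (2*S) := by
        intro θ; simp only; rw [hC_per θ]
      have hshift : I k l = ∫ θ in (θ₁-S)..(θ₁+S), ((l - C θ)^(k+1))⁻¹ := by
        have h := hper'.intervalIntegral_add_eq 0 (θ₁-S)
        rw [zero_add, show θ₁-S+2*S = θ₁+S by ring] at h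
        rw [hIdef]
        exact h
      have hptwise : ∀ᵐ θ ∂(volume : Measure ℝ), θ ∈ Icc (θ₁-S) (θ₁+S) →
          ((l - C θ)^(k+1))⁻¹ ≤ (l-M)^(β-((k:ℝ)+1)) * G θ := by
        filter_upwards [hθ₁ae] with θ hθne hθmem
        obtain ⟨hm1, hm2⟩ := hθmem
        have ht0 : 0 < |θ - θ₁| := abs_pos.2 (sub_ne_zero.2 hθne)
        have hCθ := hCle θ
        have hyμ : l - M ≤ l - C θ := by linarith
        rcases lt_or_ge (|θ - θ₁|) ε' with hnear | hfar
        · have hlow' : A * |θ-θ₁| ^ α ≤ M - C θ := hlow θ (lt_of_lt_of_le hnear hε'ε)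
          have hmpos : (0:ℝ) < A * |θ-θ₁| ^ α := by positivity
          have step := stmt6_inv_pow_le (y := l - C θ) (μ := l - M) k hμ hmpos hyμ
            (by linarith) hβpos.le hβk
          refine step.trans ?_
          have hrw : (A * |θ-θ₁| ^ α)^(-β) = A^(-β) * |θ - θ₁| ^ p := by
            rw [Real.mul_rpow hA.le (Real.rpow_nonneg (abs_nonneg _) _),
              ← Real.rpow_mul (abs_nonneg _)]
            rw [show α * -β = p by rw [hpdef]; ring]
          rw [hrw]
          apply mul_le_mul_of_nonneg_left _ (Real.rpow_nonneg hμ.le _)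
          simp only [hGdef]
          exact le_add_of_nonneg_right (Real.rpow_nonneg hδpos.le _)
        · have hθK : θ ∈ K := by
            rcases le_or_gt θ θ₁ with hle | hlt
            · left
              rw [abs_sub_comm, abs_of_nonneg (by linarith)] at hfar
              exact ⟨hm1, by linarith⟩
            · right
              rw [abs_of_pos (by linarith)] at hfar
              exact ⟨by linarith, hm2⟩
          have step := stmt6_inv_pow_le (y := l - C θ) (μ := l - M) k hμ hδpos hyμ
            (by linarith [hδle θ hθK]) hβpos.le hβk
          refine step.trans ?_
          apply mul_le_mul_of_nonneg_left _ (Real.rpow_nonneg hμ.le _)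
          simp only [hGdef]
          exact le_add_of_nonneg_left
            (mul_nonneg (Real.rpow_nonneg hA.le _) (Real.rpow_nonneg (abs_nonneg _) _))
      have hleft : IntervalIntegrable (fun θ => ((l - C θ)^(k+1))⁻¹)
          volume (θ₁-S) (θ₁+S) := (hIcont k l hl).intervalIntegrable _ _
      have hright : IntervalIntegrable (fun θ => (l-M)^(β-((k:ℝ)+1)) * G θ)
          volume (θ₁-S) (θ₁+S) := hGint.const_mul _
      have hmono := intervalIntegral.integral_mono_ae_restrict
        (by linarith : θ₁-S ≤ θ₁+S) hleft hright
        ((ae_restrict_iff' measurableSet_Icc).2 hptwise)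
      rw [hshift]
      calc (∫ θ in (θ₁-S)..(θ₁+S), ((l - C θ)^(k+1))⁻¹)
          ≤ ∫ θ in (θ₁-S)..(θ₁+S), (l-M)^(β-((k:ℝ)+1)) * G θ := hmono
        _ = (l-M)^(β-((k:ℝ)+1)) * Cst := by
            rw [intervalIntegral.integral_const_mul, hCstdef]
    apply squeeze_zero' (g := fun l => Cst * (l-M)^(ν + (β - ((k:ℝ)+1))))
    · filter_upwards [self_mem_nhdsWithin] with l hl
      simp only [mem_Ioi] at hl
      exact mul_nonneg (Real.rpow_nonneg (by linarith) _) (hInn k l hl)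
    · filter_upwards [self_mem_nhdsWithin] with l hl
      simp only [mem_Ioi] at hl
      have hμ : (0:ℝ) < l - M := by linarith
      calc (l-M)^ν * I k l
          ≤ (l-M)^ν * ((l-M)^(β - ((k:ℝ)+1)) * Cst) :=
            mul_le_mul_of_nonneg_left (hbound l hl) (Real.rpow_nonneg hμ.le _)
        _ = Cst * (l-M)^(ν + (β - ((k:ℝ)+1))) := by
            rw [Real.rpow_add hμ]; ring
    · have hexp : 0 < ν + (β - ((k:ℝ)+1)) := by linarith
      have t2 : Tendsto (fun x : ℝ => x ^ (ν + (β - ((k:ℝ)+1)))) (𝓝 0) (𝓝 0) := by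
        have hc := (Real.continuousAt_rpow_const 0 (ν + (β - ((k:ℝ)+1)))
          (Or.inr hexp.le)).tendsto
        rwa [Real.zero_rpow hexp.ne'] at hc
      have hfin := (t2.comp hsub).const_mul Cst
      rw [mul_zero] at hfin
      exact hfin
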